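/- The renaming action on supported functions is well-defined: for two freshening pairs (ρ₁,ρ₂) and (ρ₁',ρ₂') for nontriv(ρ) with respect to supp(x) ∪ S_f, we have (ρ₂∘ρ)·f(ρ₁·x) = (ρ₂'∘ρ)·f(ρ₁'·x). -/

import Mathlib

abbrev Atom := ℕ

def RenMonoid : Submonoid (Function.End Atom) where
  carrier := {ρ | {a | ρ a ≠ a}.Finite}
  one_mem' := Set.Finite.subset Set.finite_empty (fun _ ha => (ha rfl).elim)
  mul_mem' := by
    intro ρ ρ' hρ hρ'
    refine Set.Finite.subset (Set.Finite.union hρ hρ') fun a ha => ?_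
    by_contra h
    simp only [Set.mem_union, Set.mem_setOf_eq, not_or, not_not] at h
    exact ha (show ρ (ρ' a) = a by rw [h.2, h.1])

abbrev Ren : Type := RenMonoid

def rdom (ρ : Ren) : Set Atom := {a | ρ.1 a ≠ a}
def rimg (ρ : Ren) : Set Atom := ρ.1 '' rdom ρ
def rnontriv (ρ : Ren) : Set Atom := rdom ρ ∪ rimg ρ

def RSupports {X : Type*} [MulAction Ren X] (A : Set Atom) (x : X) : Prop :=
  ∀ ρ ρ' : Ren, (∀ a ∈ A, ρ.1 a = ρ'.1 a) → ρ • x = ρ' • x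

def RIsLeastSupport {X : Type*} [MulAction Ren X] (S : Set Atom) (x : X) : Prop :=
  RSupports S x ∧ ∀ A, RSupports A x → S ⊆ A

def IsPermissionSet (S : Set Atom) : Prop :=
  ∃ A B : Finset Atom, (↑A : Set Atom) ⊆ {n | n % 2 = 1} ∧ (↑B : Set Atom) ⊆ {n | n % 2 = 0} ∧
    S = ({n : Atom | n % 2 = 0} ∪ ↑A) \ ↑B

def atomRen (a b : Atom) : Ren :=
  ⟨fun c => if c = a then b else c, by
    show {c | (if c = a then b else c) ≠ c}.Finite
    apply Set.Finite.subset (Set.finite_singleton a)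
    intro c hc
    by_contra hn
    simp only [Set.mem_singleton_iff] at hn
    exact hc (by simp [if_neg hn])⟩

def FunSupportedBy {X Y : Type*} [MulAction Ren X] [MulAction Ren Y]
    (S : Set Atom) (f : X → Y) : Prop :=
  ∀ (ρ : Ren) (x : X), rdom ρ ∩ S = ∅ → ρ • f x = f (ρ • x)

def FreshPair (ρ₁ ρ₂ : Ren) (A S : Set Atom) : Prop :=
  rdom ρ₁ = A ∧ rdom ρ₂ = rimg ρ₁ ∧ (∀ a ∈ A, ρ₂.1 (ρ₁.1 a) = a) ∧
    rdom ρ₂ ∩ (S ∪ A) = ∅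

instance : SMul Ren Atom := ⟨fun ρ a => ρ.1 a⟩
instance : MulAction Ren Atom where
  one_smul _ := rfl
  mul_smul _ _ _ := rfl

open Classical in
/-- Restriction of a renaming to a set. -/
noncomputable def restr (ρ : Ren) (T : Set Atom) : Ren :=
  ⟨fun a => if a ∈ T then ρ.1 a else a, by
    show {a | (if a ∈ T then ρ.1 a else a) ≠ a}.Finite
    apply Set.Finite.subset ρ.2
    intro a ha
    simp only [Set.mem_setOf_eq] at ha ⊢
    by_cases hT : a ∈ T
    · rwa [if_pos hT] at ha
    · exact absurd rfl (by rwa [if_neg hT] at ha)⟩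

open Classical in
lemma restr_apply_mem (ρ : Ren) (T : Set Atom) {a : Atom} (ha : a ∈ T) :
    (restr ρ T).1 a = ρ.1 a := by simp [restr, ha]

open Classical in
lemma restr_apply_not_mem (ρ : Ren) (T : Set Atom) {a : Atom} (ha : a ∉ T) :
    (restr ρ T).1 a = a := by simp [restr, ha]

lemma rdom_restr_subset (ρ : Ren) (T : Set Atom) : rdom (restr ρ T) ⊆ T := by
  intro a ha
  by_contra hT
  exact ha (restr_apply_not_mem ρ T hT)

lemma ren_mul_apply (σ τ : Ren) (a : Atom) : (σ * τ).1 a = σ.1 (τ.1 a) := rfl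

theorem stmt8 {X Y : Type*} [MulAction Ren X] [MulAction Ren Y]
    (suppX : X → Set Atom) (suppY : Y → Set Atom)
    (hX : ∀ x, RIsLeastSupport (suppX x) x) (hY : ∀ y, RIsLeastSupport (suppY y) y)
    (f : X → Y) (Sf : Set Atom) (hSf : IsPermissionSet Sf) (hf : FunSupportedBy Sf f)
    (ρ : Ren) (x : X)
    (ρ₁ ρ₂ : Ren) (h : FreshPair ρ₁ ρ₂ (rnontriv ρ) (suppX x ∪ Sf))
    (ρ₁' ρ₂' : Ren) (h' : FreshPair ρ₁' ρ₂' (rnontriv ρ) (suppX x ∪ Sf)) :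
    (ρ₂ * ρ) • f (ρ₁ • x) = (ρ₂' * ρ) • f (ρ₁' • x) := by
  classical
  obtain ⟨h1, h2, h3, h4⟩ := h
  obtain ⟨h1', h2', h3', h4'⟩ := h'
  -- basic pointwise facts
  have hfix : ∀ (τ : Ren) (a : Atom), a ∉ rdom τ → τ.1 a = a := by
    intro τ a ha; by_contra hc; exact ha hc
  have hdisj : ∀ a ∈ rdom ρ₂, a ∉ suppX x ∧ a ∉ Sf ∧ a ∉ rnontriv ρ := by
    intro a ha
    have h0 : ∀ s, s ∈ rdom ρ₂ ∩ ((suppX x ∪ Sf) ∪ rnontriv ρ) → False := by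
      intro s hs; rw [h4] at hs; exact hs
    refine ⟨fun hc => h0 a ⟨ha, Or.inl (Or.inl hc)⟩,
      fun hc => h0 a ⟨ha, Or.inl (Or.inr hc)⟩, fun hc => h0 a ⟨ha, Or.inr hc⟩⟩
  have hdisj' : ∀ a ∈ rdom ρ₂', a ∉ suppX x ∧ a ∉ Sf ∧ a ∉ rnontriv ρ := by
    intro a ha
    have h0 : ∀ s, s ∈ rdom ρ₂' ∩ ((suppX x ∪ Sf) ∪ rnontriv ρ) → False := by
      intro s hs; rw [h4'] at hs; exact hs
    refine ⟨fun hc => h0 a ⟨ha, Or.inl (Or.inl hc)⟩,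
      fun hc => h0 a ⟨ha, Or.inl (Or.inr hc)⟩, fun hc => h0 a ⟨ha, Or.inr hc⟩⟩
  have hF6 : ∀ a ∈ rnontriv ρ, ρ₁.1 a ∈ rdom ρ₂ := by
    intro a ha; rw [h2]; exact ⟨a, h1 ▸ ha, rfl⟩
  have hF6' : ∀ a ∈ rnontriv ρ, ρ₁'.1 a ∈ rdom ρ₂' := by
    intro a ha; rw [h2']; exact ⟨a, h1' ▸ ha, rfl⟩
  have hF7 : ∀ b ∈ rdom ρ₂, ρ₂.1 b ∈ rnontriv ρ := by
    intro b hb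
    rw [h2] at hb
    obtain ⟨a, ha, rfl⟩ := hb
    rw [h3 a (h1 ▸ ha)]; exact h1 ▸ ha
  have hF7' : ∀ b ∈ rdom ρ₂', ρ₂'.1 b ∈ rnontriv ρ := by
    intro b hb
    rw [h2'] at hb
    obtain ⟨a, ha, rfl⟩ := hb
    rw [h3' a (h1' ▸ ha)]; exact h1' ▸ ha
  have hρA : ∀ a, a ∉ rnontriv ρ → ρ.1 a = a := by
    intro a ha; by_contra hc; exact ha (Or.inl hc)
  have hρimg : ∀ a, ρ.1 a ≠ a → ρ.1 a ∈ rnontriv ρ := by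
    intro a ha; exact Or.inr ⟨a, ha, rfl⟩
  -- the two auxiliary renamings
  set c : Ren := restr (ρ₁' * ρ₂) (rdom ρ₂) with hc_def
  set e : Ren := restr ρ₂' (rdom ρ₂' \ rdom ρ₂) with he_def
  have hcdom : rdom c ⊆ rdom ρ₂ := rdom_restr_subset _ _
  have hedom : rdom e ⊆ rdom ρ₂' \ rdom ρ₂ := rdom_restr_subset _ _
  have hcSf : rdom c ∩ Sf = ∅ := by
    apply Set.eq_empty_iff_forall_notMem.2
    intro a ⟨ha1, ha2⟩
    exact (hdisj a (hcdom ha1)).2.1 ha2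
  have heSf : rdom e ∩ Sf = ∅ := by
    apply Set.eq_empty_iff_forall_notMem.2
    intro a ⟨ha1, ha2⟩
    exact (hdisj' a (hedom ha1).1).2.1 ha2
  -- Step 1: (c * ρ₁) • x = ρ₁' • x
  have hcx : (c * ρ₁) • x = ρ₁' • x := by
    apply (hX x).1
    intro a ha
    rw [ren_mul_apply]
    by_cases hA : a ∈ rnontriv ρ
    · have hm : ρ₁.1 a ∈ rdom ρ₂ := hF6 a hA
      rw [hc_def, restr_apply_mem _ _ hm, ren_mul_apply, h3 a hA]
    · rw [hfix ρ₁ a (by rw [h1]; exact hA)]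
      have haB : a ∉ rdom ρ₂ := fun hc => (hdisj a hc).1 ha
      rw [hc_def, restr_apply_not_mem _ _ haB, hfix ρ₁' a (by rw [h1']; exact hA)]
  -- Step 2: c • f (ρ₁ • x) = f (ρ₁' • x)
  have hcf : c • f (ρ₁ • x) = f (ρ₁' • x) := by
    rw [hf c (ρ₁ • x) hcSf, ← mul_smul, hcx]
  -- Step 3: e • f (ρ₁ • x) = f (ρ₁ • x)
  have hex : (e * ρ₁) • x = ρ₁ • x := by
    apply (hX x).1
    intro a ha
    rw [ren_mul_apply]
    by_cases hA : a ∈ rnontriv ρ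
    · have hm : ρ₁.1 a ∈ rdom ρ₂ := hF6 a hA
      rw [he_def, restr_apply_not_mem _ _ (fun hd => hd.2 hm)]
    · rw [hfix ρ₁ a (by rw [h1]; exact hA)]
      have haB' : a ∉ rdom ρ₂' := fun hc => (hdisj' a hc).1 ha
      rw [he_def, restr_apply_not_mem _ _ (fun hd => haB' hd.1)]
  have hef : e • f (ρ₁ • x) = f (ρ₁ • x) := by
    rw [hf e (ρ₁ • x) heSf, ← mul_smul, hex]
  -- Step 4: σ ∘ e = σ' ∘ e where σ = (ρ₂' * ρ) * c, σ' = ρ₂ * ρ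
  have hK : ∀ t, t ∉ rdom ρ₂' \ rdom ρ₂ →
      ρ₂'.1 (ρ.1 (c.1 t)) = ρ₂.1 (ρ.1 t) := by
    intro t ht
    by_cases hB : t ∈ rdom ρ₂
    · -- t in the image of ρ₁
      have h2t := hB
      rw [h2] at h2t
      obtain ⟨a, haA, rfl⟩ := h2t
      have haA : a ∈ rnontriv ρ := h1 ▸ haA
      rw [hc_def, restr_apply_mem _ _ hB, ren_mul_apply, h3 a haA]
      have hb' : ρ₁'.1 a ∈ rdom ρ₂' := hF6' a haA
      rw [hρA (ρ₁'.1 a) (hdisj' _ hb').2.2, h3' a haA,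
        hρA (ρ₁.1 a) (hdisj _ hB).2.2, h3 a haA]
    · have hB' : t ∉ rdom ρ₂' := fun hc => ht ⟨hc, hB⟩
      rw [hc_def, restr_apply_not_mem _ _ hB]
      by_cases hρt : ρ.1 t = t
      · rw [hρt, hfix ρ₂' t hB', hfix ρ₂ t hB]
      · have hm : ρ.1 t ∈ rnontriv ρ := hρimg t hρt
        rw [hfix ρ₂' _ (fun hc => (hdisj' _ hc).2.2 hm),
          hfix ρ₂ _ (fun hc => (hdisj _ hc).2.2 hm)]
  have hE : ∀ s, e.1 s ∉ rdom ρ₂' \ rdom ρ₂ := by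
    intro s
    by_cases hs : s ∈ rdom ρ₂' \ rdom ρ₂
    · rw [he_def, restr_apply_mem _ _ hs]
      intro hd
      exact (hdisj' _ hd.1).2.2 (hF7' s hs.1)
    · rw [he_def, restr_apply_not_mem _ _ hs]; exact hs
  have hmul_eq : ((ρ₂' * ρ) * c) * e = (ρ₂ * ρ) * e := by
    apply Subtype.ext
    funext s
    show (ρ₂'.1 (ρ.1 (c.1 (e.1 s)))) = ρ₂.1 (ρ.1 (e.1 s))
    exact hK (e.1 s) (hE s)
  -- Step 5: conclude
  calc (ρ₂ * ρ) • f (ρ₁ • x)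
      = (ρ₂ * ρ) • (e • f (ρ₁ • x)) := by rw [hef]
    _ = ((ρ₂ * ρ) * e) • f (ρ₁ • x) := (mul_smul _ _ _).symm
    _ = (((ρ₂' * ρ) * c) * e) • f (ρ₁ • x) := by rw [hmul_eq]
    _ = ((ρ₂' * ρ) * c) • (e • f (ρ₁ • x)) := mul_smul _ _ _
    _ = ((ρ₂' * ρ) * c) • f (ρ₁ • x) := by rw [hef]
    _ = (ρ₂' * ρ) • (c • f (ρ₁ • x)) := mul_smul _ _ _
    _ = (ρ₂' * ρ) • f (ρ₁' • x) := by rw [hcf]
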